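/- Let k ≥ 3, ζ > 0, and let Ψ be a k-uniform constellation in which a k-tuple (a₁,…,a_k) of distinct vertices admits an ((a₁,…,a_k), ζ)-absorber A = (u, x, w, b₁,…,b_k). Suppose a path P contains as vertex-disjoint subpaths the k + 1 pre-absorption paths u·w (the 2k-vertex path u₁…u_k w₁…w_k) and, for each i ∈ [k], the (2k−1)-vertex path b_{i1}…b_{i(k−1)} x_i b_{ik}…b_{i(2k−2)}, and P avoids a₁,…,a_k. Then replacing each subpath b_{i1}…b_{i(k−1)} x_i b_{ik}…b_{i(2k−2)} by b_{i1}…b_{i(k−1)} a_i b_{ik}…b_{i(2k−2)} and the subpath u·w by u·x·w yields a path Q in H(Ψ) with V(Q) = V(P) ∪ {a₁,…,a_k} having the same end-(k−1)-tuples as P. -/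

import Mathlib

open Finset

structure Constellation (V : Type*) [DecidableEq V] where
  verts : Finset V
  edges : Finset (Finset V)
  W : Finset V → Finset V

namespace Constellation

variable {V : Type*} [DecidableEq V]

/-- The link constellation `Ψ_S`. -/
def link (Ψ : Constellation V) (S : Finset V) : Constellation V where
  verts := Ψ.verts \ S
  edges := (Ψ.edges.filter fun e => S ⊆ e).image (· \ S)
  W := fun x => Ψ.W (x ∪ S) \ S

/-- The induced subconstellation `Ψ[X]`. -/
def induce (Ψ : Constellation V) (X : Finset V) : Constellation V where
  verts := Ψ.verts ∩ X
  edges := Ψ.edges.filter fun e => e ⊆ X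
  W := fun x => Ψ.W x ∩ X

/-- `Ψ - X`. -/
def remove (Ψ : Constellation V) (X : Finset V) : Constellation V :=
  Ψ.induce (Ψ.verts \ X)

end Constellation

/-- `Ψ` is a `k`-uniform constellation. -/
def IsUniformConst {V : Type*} [DecidableEq V] (k : ℕ) (Ψ : Constellation V) : Prop :=
  ∀ e ∈ Ψ.edges, e ⊆ Ψ.verts ∧ e.card = k

/-- `ζ`-leftconnectability of a `(k-1)`-tuple (as a list) in a `k`-uniform constellation. -/
def LeftConn {V : Type*} [DecidableEq V] : ℕ → Constellation V → ℝ → List V → Prop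
  | 0, _, _, _ => False
  | 1, _, _, _ => False
  | 2, Ψ, _, xs => xs.length = 1 ∧ ∀ v ∈ xs, v ∈ Ψ.W ∅
  | (k + 3), Ψ, ζ, xs =>
      xs.length = k + 2 ∧
      ζ * (Ψ.verts.card : ℝ) ≤
        (({z : V | z ∈ Ψ.verts ∧ insert z xs.toFinset ∈ Ψ.edges ∧
            LeftConn (k + 2) (Ψ.link {z}) ζ xs.tail} : Set V).ncard : ℝ)

def RightConn {V : Type*} [DecidableEq V] (k : ℕ) (Ψ : Constellation V) (ζ : ℝ)
    (xs : List V) : Prop :=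
  LeftConn k Ψ ζ xs.reverse

def Conn {V : Type*} [DecidableEq V] (k : ℕ) (Ψ : Constellation V) (ζ : ℝ)
    (xs : List V) : Prop :=
  LeftConn k Ψ ζ xs ∧ RightConn k Ψ ζ xs

/-- A `ζ`-bridge. -/
def IsBridge {V : Type*} [DecidableEq V] (k : ℕ) (Ψ : Constellation V) (ζ : ℝ)
    (x : Fin k → V) : Prop :=
  Finset.image x Finset.univ ∈ Ψ.edges ∧
  RightConn k Ψ ζ (List.ofFn x).dropLast ∧
  LeftConn k Ψ ζ (List.ofFn x).tail

/-- number of edges of the link graph of `x` crossing between `V(R_x)` and its complement. -/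
def crossCount {V : Type*} [DecidableEq V] (Ψ : Constellation V) (x : Finset V) : ℕ :=
  ((Ψ.link x).edges.filter fun p => (p ∩ Ψ.W x).Nonempty ∧ (p \ Ψ.W x).Nonempty).card

/-- `Ψ` is an `(α, μ)`-constellation. -/
def IsAMConst {V : Type*} [DecidableEq V] (k : ℕ) (Ψ : Constellation V) (α μ : ℝ) : Prop :=
  IsUniformConst k Ψ ∧
  ∀ x : Finset V, x ⊆ Ψ.verts → x.card = k - 2 →
    ((5 / 9 + α) * (Ψ.verts.card : ℝ) ^ 2 / 2 ≤
        ((Ψ.edges.filter fun e => x ⊆ e).card : ℝ)) ∧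
    Ψ.W x ⊆ Ψ.verts ∧
    ((2 / 3 + α / 2) * (Ψ.verts.card : ℝ) ≤ ((Ψ.W x).card : ℝ)) ∧
    ((crossCount Ψ x : ℝ) ≤ μ * (Ψ.verts.card : ℝ) ^ 2)

/-- number of `y`-`z`-paths of length `ℓ` in `R_x`. -/
noncomputable def pathCount {V : Type*} [DecidableEq V] (Ψ : Constellation V) (x : Finset V)
    (y z : V) (ℓ : ℕ) : ℕ :=
  ({ l : List V | l.length = ℓ + 1 ∧ l.Nodup ∧ (∀ v ∈ l, v ∈ Ψ.W x) ∧
      l.head? = some y ∧ l.getLast? = some z ∧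
      l.Chain' (fun u v => ({u, v} : Finset V) ∈ (Ψ.link x).edges) } : Set (List V)).ncard

/-- `Ψ` is an `(α, β, ℓ, μ)`-constellation. -/
def IsConst {V : Type*} [DecidableEq V] (k : ℕ) (Ψ : Constellation V)
    (α β : ℝ) (ℓ : ℕ) (μ : ℝ) : Prop :=
  IsAMConst k Ψ α μ ∧
  ∀ x : Finset V, x ⊆ Ψ.verts → x.card = k - 2 →
    ∀ y ∈ Ψ.W x, ∀ z ∈ Ψ.W x, y ≠ z →
      β * (Ψ.verts.card : ℝ) ^ (ℓ - 1) ≤ (pathCount Ψ x y z ℓ : ℝ)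

/-- `x` is a walk (of `m` vertices) in the `k`-uniform hypergraph with edge set `E`. -/
def IsWalk {V : Type*} [DecidableEq V] (E : Finset (Finset V)) (k m : ℕ)
    (x : Fin m → V) : Prop :=
  ∀ i : ℕ, ∀ h : i + k ≤ m,
    Finset.image (fun j : Fin k => x ⟨i + j.1, by have := j.2; omega⟩) Finset.univ ∈ E

/-- `l` is a path in the `k`-uniform hypergraph with edge set `E`. -/
def IsPathList {V : Type*} [DecidableEq V] (E : Finset (Finset V)) (k : ℕ)
    (l : List V) : Prop :=
  l.Nodup ∧ ∀ i : ℕ, i + k ≤ l.length → ((l.drop i).take k).toFinset ∈ E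

set_option linter.unusedSectionVars false
namespace Stmt18Aux

variable {V : Type*} [DecidableEq V]

/-- all `k`-windows of `l` are edges. -/
def Wins (E : Finset (Finset V)) (k : ℕ) (l : List V) : Prop :=
  ∀ i : ℕ, i + k ≤ l.length → ((l.drop i).take k).toFinset ∈ E

lemma win_prefix {α : Type*} {x y : List α} {i k : ℕ} (h : i + k ≤ x.length) :
    ((x ++ y).drop i).take k = (x.drop i).take k := by
  rw [List.drop_append, Nat.sub_eq_zero_of_le (by omega), List.drop_zero,
    List.take_append, List.length_drop, Nat.sub_eq_zero_of_le (by omega),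
    List.take_zero, List.append_nil]

lemma split3 {α : Type*} (s M t : List α) (n : ℕ) :
    s ++ M ++ t = (s ++ M.take n) ++ (M.drop n ++ t) := by
  conv_rhs => rw [List.append_assoc, ← List.append_assoc (M.take n), List.take_append_drop]
  rw [List.append_assoc]

lemma drop_sub_eq {α : Type*} {M M' : List α} {n : ℕ}
    (hd : M'.reverse.take n = M.reverse.take n) :
    M'.drop (M'.length - n) = M.drop (M.length - n) := by
  have := congrArg List.reverse hd
  rwa [List.take_reverse, List.take_reverse, List.reverse_reverse, List.reverse_reverse]
    at this

lemma win_repl {E : Finset (Finset V)} {k : ℕ} (hk : 1 ≤ k) (s M M' t : List V)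
    (h1 : k - 1 ≤ M.length) (h2 : k - 1 ≤ M'.length)
    (ht : M'.take (k - 1) = M.take (k - 1))
    (hd : M'.reverse.take (k - 1) = M.reverse.take (k - 1))
    (hM' : Wins E k M') (hP : Wins E k (s ++ M ++ t)) :
    Wins E k (s ++ M' ++ t) := by
  intro i hi
  simp only [List.length_append] at hi
  rcases lt_or_ge (i + k) (s.length + (k - 1) + 1) with hc | hc
  · -- window inside `s ++ M'.take (k-1)`
    have hlen : i + k ≤ (s ++ M'.take (k - 1)).length := by
      simp only [List.length_append, List.length_take]; omega
    have hlen2 : i + k ≤ (s ++ M.take (k - 1)).length := by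
      simp only [List.length_append, List.length_take]; omega
    rw [split3 s M' t (k - 1), win_prefix hlen, ht,
      ← win_prefix (y := M.drop (k - 1) ++ t) hlen2, ← split3]
    exact hP i (by simp only [List.length_append]; omega)
  rcases le_or_gt (i + k) (s.length + M'.length) with hc2 | hc2
  · -- window inside `M'`
    have hs : s.length ≤ i := by omega
    rw [List.append_assoc, List.drop_append,
      List.drop_eq_nil_of_le hs, List.nil_append, win_prefix (by omega)]
    exact hM' (i - s.length) (by omega)
  · -- window inside last `k-1` of `M'` followed by `t`
    have hDD : M'.drop (M'.length - (k - 1)) = M.drop (M.length - (k - 1)) := drop_sub_eq hd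
    have hl1 : (s ++ M'.take (M'.length - (k - 1))).length = s.length + (M'.length - (k - 1)) := by
      simp only [List.length_append, List.length_take]; omega
    have hl2 : (s ++ M.take (M.length - (k - 1))).length = s.length + (M.length - (k - 1)) := by
      simp only [List.length_append, List.length_take]; omega
    set p := s.length + (M'.length - (k - 1)) with hp
    set p' := s.length + (M.length - (k - 1)) with hp'
    have w1 : (s ++ M' ++ t).drop i =
        (M'.drop (M'.length - (k - 1)) ++ t).drop (i - p) := by
      have h := List.drop_length_add_append (l₁ := s ++ M'.take (M'.length - (k - 1)))
        (l₂ := M'.drop (M'.length - (k - 1)) ++ t) (i - p)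
      rw [hl1, show p + (i - p) = i from by omega, ← split3] at h
      exact h
    have w2 : (s ++ M ++ t).drop (p' + (i - p)) =
        (M.drop (M.length - (k - 1)) ++ t).drop (i - p) := by
      have h := List.drop_length_add_append (l₁ := s ++ M.take (M.length - (k - 1)))
        (l₂ := M.drop (M.length - (k - 1)) ++ t) (i - p)
      rw [hl2, ← split3] at h
      exact h
    rw [w1, hDD, ← w2]
    exact hP (p' + (i - p)) (by simp only [List.length_append]; omega)

/-- replacement relation for a single piece. -/
def Rep (E : Finset (Finset V)) (k : ℕ) (M M' : List V) : Prop :=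
  k - 1 ≤ M.length ∧ k - 1 ≤ M'.length ∧ M'.take (k - 1) = M.take (k - 1) ∧
    M'.reverse.take (k - 1) = M.reverse.take (k - 1) ∧ Wins E k M'

lemma multi {E : Finset (Finset V)} {k : ℕ} (hk : 1 ≤ k) :
    ∀ {ps qs : List (List V)},
      List.Forall₂ (fun p q => p = q ∨ Rep E k p q) ps qs →
      ∀ s : List V, Wins E k (s ++ ps.flatten) → Wins E k (s ++ qs.flatten) := by
  intro ps qs h
  induction h with
  | nil => intro s hs; exact hs
  | cons hpq h ih =>
    rename_i p q ps qs
    intro s hs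
    rw [List.flatten_cons, ← List.append_assoc] at hs ⊢
    have h1 := ih (s ++ p) hs
    rcases hpq with rfl | hrep
    · exact h1
    · exact win_repl hk s p q qs.flatten hrep.1 hrep.2.1 hrep.2.2.1 hrep.2.2.2.1
        hrep.2.2.2.2 h1

lemma take_flatten_eq {α : Type*} {n : ℕ} :
    ∀ {ps qs : List (List α)},
      List.Forall₂ (fun p q => p = q ∨
        (q.take n = p.take n ∧ n ≤ p.length ∧ n ≤ q.length)) ps qs →
      qs.flatten.take n = ps.flatten.take n := by
  intro ps qs h
  induction h with
  | nil => rfl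
  | cons hpq h ih =>
    rename_i p q ps qs
    rcases hpq with rfl | ⟨hpq, hlp, hlq⟩
    · rw [List.flatten_cons, List.flatten_cons, List.take_append,
        List.take_append]
      congr 1
      have h' : ∀ l : List α, List.take (n - p.length) l =
          List.take (n - p.length) (List.take n l) := fun l => by
        rw [List.take_take, inf_eq_left.2 (Nat.sub_le _ _)]
      rw [h', h' ps.flatten, ih]
    · rw [List.flatten_cons, List.flatten_cons, List.take_append_of_le_length hlq,
        List.take_append_of_le_length hlp, hpq]

lemma forall₂_map_of_forall₂ {α β : Type*} {R : α → α → Prop} {R' : β → β → Prop}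
    {f : α → β} (hf : ∀ p q, R p q → R' (f p) (f q)) :
    ∀ {ps qs : List α}, List.Forall₂ R ps qs → List.Forall₂ R' (ps.map f) (qs.map f) := by
  intro ps qs h
  induction h with
  | nil => exact List.Forall₂.nil
  | cons hpq h ih => exact List.Forall₂.cons (hf _ _ hpq) ih

lemma forall₂_flatten_map {α ι : Type*} {R : α → α → Prop} :
    ∀ (l : List ι) (F G : ι → List α), (∀ i ∈ l, List.Forall₂ R (F i) (G i)) →
      List.Forall₂ R (l.map F).flatten (l.map G).flatten := by
  intro l
  induction l with
  | nil => intro F G h; exact List.Forall₂.nil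
  | cons a l ih =>
    intro F G h
    simp only [List.map_cons, List.flatten_cons]
    exact List.rel_append (h a (by simp)) (ih F G fun i hi => h i (by simp [hi]))

lemma flatten_pairs {α ι : Type*} :
    ∀ (l : List ι) (F G : ι → List α),
      ((l.map fun i => [F i, G i]).flatten).flatten = (l.map fun i => F i ++ G i).flatten := by
  intro l
  induction l with
  | nil => intro F G; rfl
  | cons a l ih => intro F G; simp [ih]

lemma coe_ofFn_multiset {α : Type*} : ∀ {n : ℕ} (f : Fin n → α),
    ((List.ofFn f : List α) : Multiset α) = ∑ i : Fin n, ({f i} : Multiset α) := by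
  intro n
  induction n with
  | zero => intro f; simp
  | succ n ih =>
    intro f
    rw [List.ofFn_succ, Fin.sum_univ_succ, ← ih fun i => f i.succ, ← Multiset.cons_coe,
      ← Multiset.singleton_add]

lemma coe_flatten_multiset {α : Type*} :
    ∀ (L : List (List α)),
      (L.flatten : Multiset α) = (L.map fun l => ((l : List α) : Multiset α)).sum := by
  intro L
  induction L with
  | nil => rfl
  | cons a L ih =>
    rw [List.flatten_cons, List.map_cons, List.sum_cons, ← Multiset.coe_add, ih]

/-- the modified absorber segment. -/
def segN (k : ℕ) (z : V) (l : List V) : List V :=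
  l.take (k - 1) ++ [z] ++ l.drop (k - 1)

lemma segN_length {k : ℕ} (hk : 1 ≤ k) {z : V} {l : List V} (hl : l.length = 2 * k - 2) :
    (segN k z l).length = 2 * k - 1 := by
  simp only [segN, List.length_append, List.length_take, List.length_drop, hl,
    List.length_singleton]
  omega

lemma segN_take {k : ℕ} (hk : 1 ≤ k) {z : V} {l : List V} (hl : l.length = 2 * k - 2) :
    (segN k z l).take (k - 1) = l.take (k - 1) := by
  rw [segN, List.take_append_of_le_length (by simp only [List.length_append,
      List.length_take, List.length_singleton, hl]; omega),
    List.take_append_of_le_length (by simp only [List.length_take, hl]; omega),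
    List.take_take, inf_idem]

lemma segN_revtake {k : ℕ} (hk : 1 ≤ k) {z : V} {l : List V} (hl : l.length = 2 * k - 2) :
    (segN k z l).reverse.take (k - 1) = (l.drop (k - 1)).reverse := by
  rw [segN, List.reverse_append,
    List.take_append_of_le_length (by simp only [List.length_reverse, List.length_drop, hl]; omega),
    List.take_of_length_le (by simp only [List.length_reverse, List.length_drop, hl]; omega)]

lemma segN_coe {k : ℕ} {z : V} {l : List V} :
    ((segN k z l : List V) : Multiset V) = {z} + (l : Multiset V) := by
  conv_rhs => rw [← List.take_append_drop (k - 1) l]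
  simp only [segN, ← Multiset.coe_add, Multiset.coe_singleton]
  abel

lemma segN_window {k : ℕ} (hk : 3 ≤ k) {z : V} {l : List V} (hl : l.length = 2 * k - 2)
    {i : ℕ} (hi : i + k ≤ 2 * k - 1) :
    ((segN k z l).drop i).take k = (l.take (k - 1)).drop i ++ z :: (l.drop (k - 1)).take i := by
  have hT : (l.take (k - 1)).length = k - 1 := by
    simp only [List.length_take]; omega
  have h1 : (segN k z l).drop i = (l.take (k - 1)).drop i ++ ([z] ++ l.drop (k - 1)) := by
    rw [segN, List.append_assoc, List.drop_append, hT,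
      show i - (k - 1) = 0 from by omega, List.drop_zero]
  rw [h1, List.take_append,
    List.take_of_length_le (by simp only [List.length_drop, hT]; omega),
    List.length_drop, hT, show k - (k - 1 - i) = i + 1 from by omega,
    List.singleton_append, List.take_succ_cons]

lemma link_window {k : ℕ} (hk : 3 ≤ k) {l : List V} (hl : l.length = 2 * k - 2)
    {i : ℕ} (hi : i + k ≤ 2 * k - 1) :
    ((l.drop i).take (k - 1)) = (l.take (k - 1)).drop i ++ (l.drop (k - 1)).take i := by
  have hT : (l.take (k - 1)).length = k - 1 := by
    simp only [List.length_take]; omega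
  conv_lhs => rw [← List.take_append_drop (k - 1) l]
  rw [List.drop_append, hT, show i - (k - 1) = 0 from by omega, List.drop_zero,
    List.take_append,
    List.take_of_length_le (by simp only [List.length_drop, hT]; omega),
    List.length_drop, hT, show k - 1 - (k - 1 - i) = i from by omega]

lemma wins_segN (Ψ : Constellation V) {k : ℕ} (hk : 3 ≤ k) (z : V) (l : List V)
    (hl : l.length = 2 * k - 2)
    (hpath : ∀ i : ℕ, i + (k - 1) ≤ l.length →
      ((l.drop i).take (k - 1)).toFinset ∈ (Ψ.link {z}).edges) :
    Wins Ψ.edges k (segN k z l) := by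
  intro i hi
  rw [segN_length (by omega) hl] at hi
  rw [segN_window hk hl hi]
  have hmem := hpath i (by omega)
  rw [link_window hk hl hi] at hmem
  simp only [Constellation.link] at hmem
  obtain ⟨e, he, hee⟩ := Finset.mem_image.mp hmem
  obtain ⟨heE, hz⟩ := Finset.mem_filter.mp he
  have hze : z ∈ e := Finset.singleton_subset_iff.mp hz
  have : ((l.take (k - 1)).drop i ++ z :: (l.drop (k - 1)).take i).toFinset = e := by
    rw [List.toFinset_append, List.toFinset_cons, Finset.union_insert, ← List.toFinset_append,
      ← hee, Finset.sdiff_singleton_eq_erase]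
    exact Finset.insert_erase hze
  rw [this]
  exact heE

lemma rep_seg (Ψ : Constellation V) {k : ℕ} (hk : 3 ≤ k) (z z' : V) (l : List V)
    (hl : l.length = 2 * k - 2) (hwins : Wins Ψ.edges k (segN k z' l)) :
    Rep Ψ.edges k (segN k z l) (segN k z' l) := by
  refine ⟨?_, ?_, ?_, ?_, hwins⟩
  · rw [segN_length (by omega) hl]; omega
  · rw [segN_length (by omega) hl]; omega
  · rw [segN_take (by omega) hl, segN_take (by omega) hl]
  · rw [segN_revtake (by omega) hl, segN_revtake (by omega) hl]

end Stmt18Aux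

/-- The absorption mechanism: if a path `P` in `H(Ψ)` avoiding `a₁, …, a_k` decomposes into
connecting segments `c` interleaved (in some order `π`) with the `k+1` pre-absorption paths
of an `((a₁,…,a_k), ζ)`-absorber `(u, x, w, b₁, …, b_k)`, then replacing each pre-absorption
path `b_{i,1}…b_{i,k-1} xᵢ b_{i,k}…b_{i,2k-2}` by `b_{i,1}…b_{i,k-1} aᵢ b_{i,k}…b_{i,2k-2}`
and `u·w` by `u·x·w` yields a path `Q` in `H(Ψ)` with `V(Q) = V(P) ∪ {a₁,…,a_k}` and the
same end-`(k-1)`-tuples as `P`. -/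
theorem stmt18 {V : Type*} [Fintype V] [DecidableEq V] (k : ℕ) (hk : 3 ≤ k)
    (ζ : ℝ) (hζ : 0 < ζ)
    (Ψ : Constellation V) (hΨ : IsUniformConst k Ψ)
    (a u xv w : Fin k → V) (b : Fin k → Fin (2 * k - 2) → V)
    (ha : Function.Injective a)
    -- the absorber vertices are distinct and different from the `aᵢ`:
    (habsnd : (List.ofFn u ++ List.ofFn xv ++ List.ofFn w ++
        (List.ofFn (fun i : Fin k => List.ofFn (b i))).flatten).Nodup)
    (habsav : ∀ v ∈ (List.ofFn u ++ List.ofFn xv ++ List.ofFn w ++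
        (List.ofFn (fun i : Fin k => List.ofFn (b i))).flatten), ∀ i : Fin k, v ≠ a i)
    -- `u·x·w` and `u·w` are paths in `H(Ψ)`:
    (hpuxw : IsPathList Ψ.edges k (List.ofFn u ++ List.ofFn xv ++ List.ofFn w))
    (hpuw : IsPathList Ψ.edges k (List.ofFn u ++ List.ofFn w))
    -- connectability of `(u₁,…,u_{k-1})` and `(w₂,…,w_k)`:
    (hu : RightConn k Ψ ζ (List.ofFn u).dropLast)
    (hw : LeftConn k Ψ ζ (List.ofFn w).tail)
    -- each `bᵢ` is a `(k-1)`-uniform path in both links with `ζ`-connectable end-tuples: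
    (hb : ∀ i : Fin k,
      IsPathList (Ψ.link {a i}).edges (k - 1) (List.ofFn (b i)) ∧
      IsPathList (Ψ.link {xv i}).edges (k - 1) (List.ofFn (b i)) ∧
      Conn k Ψ ζ ((List.ofFn (b i)).take (k - 1)) ∧
      Conn k Ψ ζ ((List.ofFn (b i)).drop (k - 1)))
    -- `P` is a path in `H(Ψ)` avoiding the `aᵢ`:
    (P : List V) (hP : IsPathList Ψ.edges k P)
    (hPa : ∀ i : Fin k, a i ∉ P)
    -- `P` contains the `k+1` pre-absorption paths as (vertex-disjoint) subpaths:
    (π : Equiv.Perm (Fin (k + 1))) (c : Fin (k + 2) → List V)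
    (hdecomp : P = (List.ofFn (fun i : Fin (k + 1) =>
        c ⟨i.1, by have := i.2; omega⟩ ++
        (if h0 : (π i).1 = 0 then List.ofFn u ++ List.ofFn w
         else
           (List.ofFn (b ⟨(π i).1 - 1, by have := (π i).2; omega⟩)).take (k - 1) ++
           [xv ⟨(π i).1 - 1, by have := (π i).2; omega⟩] ++
           (List.ofFn (b ⟨(π i).1 - 1, by have := (π i).2; omega⟩)).drop (k - 1)))).flatten ++
        c ⟨k + 1, by omega⟩) :
    ∃ Q : List V,
      Q = (List.ofFn (fun i : Fin (k + 1) =>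
        c ⟨i.1, by have := i.2; omega⟩ ++
        (if h0 : (π i).1 = 0 then List.ofFn u ++ List.ofFn xv ++ List.ofFn w
         else
           (List.ofFn (b ⟨(π i).1 - 1, by have := (π i).2; omega⟩)).take (k - 1) ++
           [a ⟨(π i).1 - 1, by have := (π i).2; omega⟩] ++
           (List.ofFn (b ⟨(π i).1 - 1, by have := (π i).2; omega⟩)).drop (k - 1)))).flatten ++
        c ⟨k + 1, by omega⟩ ∧
      IsPathList Ψ.edges k Q ∧
      Q.toFinset = P.toFinset ∪ Finset.image a Finset.univ ∧
      Q.take (k - 1) = P.take (k - 1) ∧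
      Q.reverse.take (k - 1) = P.reverse.take (k - 1) := by
  classical
  have hk1 : 1 ≤ k := by omega
  -- the old and new middle segments, as functions of the position value
  set SP : Fin (k + 1) → List V := fun v =>
    if h0 : v.1 = 0 then List.ofFn u ++ List.ofFn w
    else Stmt18Aux.segN k (xv ⟨v.1 - 1, by have := v.2; omega⟩)
      (List.ofFn (b ⟨v.1 - 1, by have := v.2; omega⟩)) with hSPdef
  set SQ : Fin (k + 1) → List V := fun v =>
    if h0 : v.1 = 0 then List.ofFn u ++ List.ofFn xv ++ List.ofFn w
    else Stmt18Aux.segN k (a ⟨v.1 - 1, by have := v.2; omega⟩)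
      (List.ofFn (b ⟨v.1 - 1, by have := v.2; omega⟩)) with hSQdef
  have hblen : ∀ t : Fin k, (List.ofFn (b t)).length = 2 * k - 2 := fun t => by
    simp [List.length_ofFn]
  -- `P` in terms of `SP`
  have hPF : P = (List.ofFn fun i : Fin (k + 1) =>
      c ⟨i.1, by have := i.2; omega⟩ ++ SP (π i)).flatten ++ c ⟨k + 1, by omega⟩ := hdecomp
  -- the pieces of the decompositions of `P` and of `Q`
  set ps : List (List V) := ((List.finRange (k + 1)).map fun i =>
    [c ⟨i.1, by have := i.2; omega⟩, SP (π i)]).flatten ++ [c ⟨k + 1, by omega⟩] with hpsdef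
  set qs : List (List V) := ((List.finRange (k + 1)).map fun i =>
    [c ⟨i.1, by have := i.2; omega⟩, SQ (π i)]).flatten ++ [c ⟨k + 1, by omega⟩] with hqsdef
  have key : ∀ (G : Fin (k + 1) → List V) (cl : List V),
      (((List.finRange (k + 1)).map fun i =>
          [c ⟨i.1, by have := i.2; omega⟩, G (π i)]).flatten ++ [cl]).flatten
        = (List.ofFn fun i : Fin (k + 1) =>
            c ⟨i.1, by have := i.2; omega⟩ ++ G (π i)).flatten ++ cl := by
    intro G cl
    rw [List.flatten_append, Stmt18Aux.flatten_pairs, ← List.ofFn_eq_map]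
    simp
  have hPps : P = ps.flatten := by rw [hPF, hpsdef]; exact (key SP (c ⟨k + 1, by omega⟩)).symm
  have hQqs : (List.ofFn fun i : Fin (k + 1) =>
      c ⟨i.1, by have := i.2; omega⟩ ++ SQ (π i)).flatten ++ c ⟨k + 1, by omega⟩
        = qs.flatten := by
    rw [hqsdef]; exact (key SQ (c ⟨k + 1, by omega⟩)).symm
  -- the replacement relation between corresponding pieces
  have hRep : ∀ v : Fin (k + 1), Stmt18Aux.Rep Ψ.edges k (SP v) (SQ v) := by
    intro v
    by_cases h0 : v.1 = 0
    · rw [hSPdef, hSQdef]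
      simp only [dif_pos h0]
      have h3 : ∀ rest : List V, (List.ofFn u ++ rest).take (k - 1)
          = (List.ofFn u).take (k - 1) := fun rest =>
        List.take_append_of_le_length (by simp only [List.length_ofFn]; omega)
      have h4 : ∀ rest : List V, ((List.ofFn w).reverse ++ rest).take (k - 1)
          = (List.ofFn w).reverse.take (k - 1) := fun rest =>
        List.take_append_of_le_length
          (by simp only [List.length_reverse, List.length_ofFn]; omega)
      refine ⟨by simp only [List.length_append, List.length_ofFn]; omega,
        by simp only [List.length_append, List.length_ofFn]; omega, ?_, ?_, ?_⟩
      · rw [List.append_assoc, h3, h3]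
      · rw [List.reverse_append, List.reverse_append, List.reverse_append, h4, h4]
      · exact hpuxw.2
    · rw [hSPdef, hSQdef]
      simp only [dif_neg h0]
      refine Stmt18Aux.rep_seg Ψ hk _ _ _ (hblen _)
        (Stmt18Aux.wins_segN Ψ hk _ _ (hblen _) ?_)
      intro i hi
      exact (hb _).1.2 i hi
  have hF2 : List.Forall₂ (fun p q => p = q ∨ Stmt18Aux.Rep Ψ.edges k p q) ps qs := by
    rw [hpsdef, hqsdef]
    refine List.rel_append ?_ (List.Forall₂.cons (Or.inl rfl) List.Forall₂.nil)
    apply Stmt18Aux.forall₂_flatten_map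
    intro i _
    exact List.Forall₂.cons (Or.inl rfl)
      (List.Forall₂.cons (Or.inr (hRep (π i))) List.Forall₂.nil)
  -- the multiset identity : Q = P + {a₁,…,a_k}
  have hsum : ∑ v : Fin (k + 1), ((SQ v : List V) : Multiset V)
      = ∑ v : Fin (k + 1), ((SP v : List V) : Multiset V) + ↑(List.ofFn a) := by
    have h1 : ∀ v : Fin (k + 1),
        ((SQ v : List V) : Multiset V) +
          (if h : v.1 = 0 then 0 else ({xv ⟨v.1 - 1, by have := v.2; omega⟩} : Multiset V))
        = ((SP v : List V) : Multiset V) +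
          (if h : v.1 = 0 then (↑(List.ofFn xv) : Multiset V)
            else ({a ⟨v.1 - 1, by have := v.2; omega⟩} : Multiset V)) := by
      intro v
      by_cases h0 : v.1 = 0
      · rw [hSPdef, hSQdef]
        simp only [dif_pos h0]
        simp only [← Multiset.coe_add, add_zero]
        abel
      · rw [hSPdef, hSQdef]
        simp only [dif_neg h0, Stmt18Aux.segN_coe]
        abel
    have h2 := Finset.sum_congr rfl (fun v (_ : v ∈ Finset.univ) => h1 v)
    rw [Finset.sum_add_distrib, Finset.sum_add_distrib] at h2
    have he : (∑ v : Fin (k + 1),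
        if h : v.1 = 0 then (0 : Multiset V) else {xv ⟨v.1 - 1, by have := v.2; omega⟩})
        = ↑(List.ofFn xv) := by
      rw [Fin.sum_univ_succ, Stmt18Aux.coe_ofFn_multiset]
      simp [Fin.val_succ]
    have hf : (∑ v : Fin (k + 1),
        if h : v.1 = 0 then (↑(List.ofFn xv) : Multiset V)
          else {a ⟨v.1 - 1, by have := v.2; omega⟩})
        = ↑(List.ofFn xv) + ↑(List.ofFn a) := by
      rw [Fin.sum_univ_succ, Stmt18Aux.coe_ofFn_multiset (f := a)]
      simp [Fin.val_succ]
    rw [he, hf] at h2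
    refine add_right_cancel (b := (↑(List.ofFn xv) : Multiset V)) (h2.trans ?_)
    abel
  have coeflat : ∀ G : Fin (k + 1) → List V,
      ((((List.ofFn fun i : Fin (k + 1) =>
          c ⟨i.1, by have := i.2; omega⟩ ++ G (π i)).flatten ++ c ⟨k + 1, by omega⟩ : List V))
            : Multiset V)
      = ∑ i : Fin (k + 1), ((G (π i) : List V) : Multiset V) +
        (∑ i : Fin (k + 1), ((c ⟨i.1, by have := i.2; omega⟩ : List V) : Multiset V) +
          ↑(c ⟨k + 1, by omega⟩)) := by
    intro G
    rw [← Multiset.coe_add, Stmt18Aux.coe_flatten_multiset, List.map_ofFn, List.sum_ofFn]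
    have : ∀ i : Fin (k + 1),
        ((((fun l => ((l : List V) : Multiset V)) ∘ fun i : Fin (k + 1) =>
          c ⟨i.1, by have := i.2; omega⟩ ++ G (π i)) i) : Multiset V)
        = ((c ⟨i.1, by have := i.2; omega⟩ : List V) : Multiset V) + ↑(G (π i)) := by
      intro i
      simp only [Function.comp_apply, ← Multiset.coe_add]
    rw [Finset.sum_congr rfl fun i _ => this i, Finset.sum_add_distrib]
    abel
  have hQM : (((List.ofFn fun i : Fin (k + 1) =>
      c ⟨i.1, by have := i.2; omega⟩ ++ SQ (π i)).flatten ++ c ⟨k + 1, by omega⟩ : List V)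
        : Multiset V)
      = ↑P + ↑(List.ofFn a) := by
    rw [coeflat SQ, hPF, coeflat SP,
      Equiv.sum_comp π (fun v => ((SQ v : List V) : Multiset V)),
      Equiv.sum_comp π (fun v => ((SP v : List V) : Multiset V)), hsum]
    abel
  have hQperm : (((List.ofFn fun i : Fin (k + 1) =>
      c ⟨i.1, by have := i.2; omega⟩ ++ SQ (π i)).flatten ++ c ⟨k + 1, by omega⟩ : List V)).Perm
        (P ++ List.ofFn a) :=
    Multiset.coe_eq_coe.mp (by rw [hQM, Multiset.coe_add])
  have hPa' : (P ++ List.ofFn a).Nodup := by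
    rw [List.nodup_append]
    refine ⟨hP.1, List.nodup_ofFn.mpr ha, fun v hvP x hva => ?_⟩
    rw [List.mem_ofFn] at hva
    obtain ⟨i, rfl⟩ := hva
    exact fun h => hPa i (h ▸ hvP)
  refine ⟨(List.ofFn fun i : Fin (k + 1) =>
      c ⟨i.1, by have := i.2; omega⟩ ++ SQ (π i)).flatten ++ c ⟨k + 1, by omega⟩,
    rfl, ⟨hQperm.nodup_iff.mpr hPa', ?_⟩, ?_, ?_, ?_⟩
  · -- windows
    rw [hQqs]
    have := Stmt18Aux.multi hk1 hF2 []
      (by rw [List.nil_append, ← hPps]; exact hP.2)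
    rw [List.nil_append] at this
    exact this
  · -- vertex sets
    have htf : ((List.ofFn fun i : Fin (k + 1) =>
        c ⟨i.1, by have := i.2; omega⟩ ++ SQ (π i)).flatten ++
          c ⟨k + 1, by omega⟩ : List V).toFinset = (P ++ List.ofFn a).toFinset :=
      Finset.ext fun x => by
        simp only [List.mem_toFinset]
        exact hQperm.mem_iff
    rw [htf, List.toFinset_append]
    congr 1
    ext x
    simp [List.mem_ofFn]
  · -- first end-tuple
    rw [hQqs, hPps]
    refine Stmt18Aux.take_flatten_eq (hF2.imp fun p q h => ?_)
    rcases h with rfl | hrep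
    · exact Or.inl rfl
    · exact Or.inr ⟨hrep.2.2.1, hrep.1, hrep.2.1⟩
  · -- last end-tuple
    rw [hQqs, hPps, List.reverse_flatten, List.reverse_flatten]
    refine Stmt18Aux.take_flatten_eq (List.forall₂_reverse_iff.mpr
      (Stmt18Aux.forall₂_map_of_forall₂ (f := List.reverse) (fun p q h => ?_) hF2))
    rcases h with rfl | hrep
    · exact Or.inl rfl
    · exact Or.inr ⟨hrep.2.2.2.1, by simp [hrep.1], by simp [hrep.2.1]⟩
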